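/- arXiv:2404.17111 — 2 statements merged into one kernel-verified Lean document; each statement's English description precedes it below -/
import Mathlib

section
/- Let φ(z) = z/(1+z) and Z₃ = φ(z)∂_z acting on smooth functions of z ∈ (0,∞). For every k ∈ ℕ there exist smooth functions a^k_{0,φ}, …, a^k_{k,φ} and b^k_{0,φ}, …, b^k_{k,φ} of z, bounded on [0,∞), depending only on φ and k, with a^k_{k,φ} ≡ 1, such that for every smooth function f on (0,∞) and all z > 0: Z₃^k(∂_{zz} f) = Σ_{l=0}^{k} ( a^k_{l,φ}(z) ∂_{zz}(Z₃^l f) + b^k_{l,φ}(z) ∂_z(Z₃^l f) ). -/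
open Set Polynomial

noncomputable section

/-- `φ(z) = z / (1 + z)`. -/
def phi (z : ℝ) : ℝ := z / (1 + z)

/-- The conormal vector field `Z₃ = φ(z) ∂_z` acting on functions of `z`. -/
def Z3op (f : ℝ → ℝ) : ℝ → ℝ := fun z => phi z * deriv f z

namespace Z3aux

/-- `Dop P` represents `φ(z) · d/dz (P(1/(1+z)))` as a polynomial in `u = 1/(1+z)`. -/
def Dop (P : Polynomial ℝ) : Polynomial ℝ := (X ^ 3 - X ^ 2) * P.derivative

/-- Coefficient polynomials in `u = 1/(1+z)`. -/
def AB : ℕ → ℕ → Polynomial ℝ × Polynomial ℝ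
  | 0, 0 => (1, 0)
  | 0, _ + 1 => (0, 0)
  | k + 1, 0 =>
      (Dop (AB k 0).1 + (-((2:Polynomial ℝ) * X)) * (AB k 0).1 + (1 - X) * (AB k 0).2,
       Dop (AB k 0).2)
  | k + 1, l + 1 =>
      (Dop (AB k (l + 1)).1 + (-((2:Polynomial ℝ) * X)) * (AB k (l + 1)).1
          + (1 - X) * (AB k (l + 1)).2 + (AB k l).1,
       Dop (AB k (l + 1)).2 + ((2:Polynomial ℝ) * X) * (AB k l).1)

lemma Dop_zero : Dop 0 = 0 := by simp [Dop]

lemma AB_succ_zero (k : ℕ) :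
    AB (k + 1) 0 = (Dop (AB k 0).1 + (-((2:Polynomial ℝ) * X)) * (AB k 0).1 + (1 - X) * (AB k 0).2,
      Dop (AB k 0).2) := rfl

lemma AB_succ_succ (k l : ℕ) :
    AB (k + 1) (l + 1) = (Dop (AB k (l + 1)).1 + (-((2:Polynomial ℝ) * X)) * (AB k (l + 1)).1
          + (1 - X) * (AB k (l + 1)).2 + (AB k l).1,
       Dop (AB k (l + 1)).2 + ((2:Polynomial ℝ) * X) * (AB k l).1) := rfl

lemma AB_of_lt : ∀ k l, k < l → AB k l = (0, 0) := by
  intro k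
  induction k with
  | zero =>
      rintro (_ | l) h
      · omega
      · rfl
  | succ k ih =>
      rintro (_ | l) h
      · omega
      · have h1 : AB k (l + 1) = (0, 0) := ih (l + 1) (by omega)
        have h2 : AB k l = (0, 0) := ih l (by omega)
        rw [AB_succ_succ, h1, h2]
        simp [Dop_zero]

lemma AB_diag : ∀ k, (AB k k).1 = 1 := by
  intro k
  induction k with
  | zero => rfl
  | succ k ih =>
      have h1 : AB k (k + 1) = (0, 0) := AB_of_lt k (k + 1) (by omega)
      rw [AB_succ_succ, h1]
      simp [Dop_zero, ih]

end Z3aux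

namespace Z3aux

lemma hasDerivAt_inv1 {z : ℝ} (hz : (1:ℝ) + z ≠ 0) :
    HasDerivAt (fun w : ℝ => 1 / (1 + w)) (-(1 / (1 + z) ^ 2)) z := by
  have h : HasDerivAt (fun w : ℝ => 1 + w) 1 z := (hasDerivAt_id z).const_add 1
  have h2 := h.fun_inv hz
  simpa [one_div, neg_div] using h2

lemma eval_hasDerivAt (P : Polynomial ℝ) {z : ℝ} (hz : (1:ℝ) + z ≠ 0) :
    HasDerivAt (fun w => P.eval (1 / (1 + w)))
      (-(1 / (1 + z) ^ 2) * P.derivative.eval (1 / (1 + z))) z := by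
  have h := (P.hasDerivAt (1 / (1 + z))).comp z (hasDerivAt_inv1 hz)
  exact h.congr_deriv (by ring)

lemma phi_hasDerivAt {z : ℝ} (hz : (1:ℝ) + z ≠ 0) :
    HasDerivAt phi (1 / (1 + z) ^ 2) z := by
  have h : HasDerivAt (fun w : ℝ => 1 + w) 1 z := (hasDerivAt_id z).const_add 1
  have h2 := (hasDerivAt_id z).div h hz
  exact h2.congr_deriv (by simp only [id]; ring)

lemma dphi_hasDerivAt {z : ℝ} (hz : (1:ℝ) + z ≠ 0) :
    HasDerivAt (fun w : ℝ => 1 / (1 + w) ^ 2) (-2 / (1 + z) ^ 3) z := by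
  have h : HasDerivAt (fun w : ℝ => 1 + w) 1 z := (hasDerivAt_id z).const_add 1
  have h2 := (hasDerivAt_const z (1:ℝ)).div (h.pow 2) (pow_ne_zero 2 hz)
  exact h2.congr_deriv (by simp only [Pi.pow_apply]; push_cast; field_simp; ring)

lemma phi_smoothOn : ContDiffOn ℝ (⊤ : ℕ∞) phi (Ioi (0:ℝ)) := by
  apply ContDiffOn.div contDiffOn_id (contDiffOn_const.add contDiffOn_id)
  intro x hx
  have : (0:ℝ) < x := hx
  positivity

lemma hasDerivAt_of_smooth {g : ℝ → ℝ} (hg : ContDiffOn ℝ (⊤ : ℕ∞) g (Ioi (0:ℝ)))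
    {z : ℝ} (hz : 0 < z) : HasDerivAt g (deriv g z) z :=
  ((hg.contDiffAt (isOpen_Ioi.mem_nhds hz)).differentiableAt (by simp)).hasDerivAt

lemma deriv_smooth {g : ℝ → ℝ} (hg : ContDiffOn ℝ (⊤ : ℕ∞) g (Ioi (0:ℝ))) :
    ContDiffOn ℝ (⊤ : ℕ∞) (deriv g) (Ioi (0:ℝ)) :=
  hg.deriv_of_isOpen isOpen_Ioi (by exact_mod_cast le_top)

lemma Z3_smooth {g : ℝ → ℝ} (hg : ContDiffOn ℝ (⊤ : ℕ∞) g (Ioi (0:ℝ))) :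
    ContDiffOn ℝ (⊤ : ℕ∞) (Z3op g) (Ioi (0:ℝ)) :=
  phi_smoothOn.mul (deriv_smooth hg)

lemma iter_smooth {f : ℝ → ℝ} (hf : ContDiffOn ℝ (⊤ : ℕ∞) f (Ioi (0:ℝ))) (l : ℕ) :
    ContDiffOn ℝ (⊤ : ℕ∞) (Z3op^[l] f) (Ioi (0:ℝ)) := by
  induction l with
  | zero => exact hf
  | succ l ih => rw [Function.iterate_succ_apply']; exact Z3_smooth ih

lemma Z3_deriv_eq {g : ℝ → ℝ} (hg : ContDiffOn ℝ (⊤ : ℕ∞) g (Ioi (0:ℝ)))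
    {z : ℝ} (hz : 0 < z) :
    deriv (Z3op g) z = 1 / (1 + z) ^ 2 * deriv g z + phi z * deriv (deriv g) z := by
  have hne : (1:ℝ) + z ≠ 0 := by positivity
  exact ((phi_hasDerivAt hne).mul (hasDerivAt_of_smooth (deriv_smooth hg) hz)).deriv

lemma key {g : ℝ → ℝ} (hg : ContDiffOn ℝ (⊤ : ℕ∞) g (Ioi (0:ℝ)))
    {z : ℝ} (hz : 0 < z) :
    phi z * deriv (deriv (deriv g)) z
      = -2 * (1 / (1 + z)) * deriv (deriv g) z + deriv (deriv (Z3op g)) z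
        + 2 * (1 / (1 + z)) * deriv (Z3op g) z := by
  have hne : (1:ℝ) + z ≠ 0 := by positivity
  have hg1 := deriv_smooth hg
  have hg2 := deriv_smooth hg1
  have hev : deriv (Z3op g) =ᶠ[nhds z]
      fun w => 1 / (1 + w) ^ 2 * deriv g w + phi w * deriv (deriv g) w := by
    filter_upwards [isOpen_Ioi.mem_nhds hz] with w hw
    exact Z3_deriv_eq hg hw
  have h2 : deriv (deriv (Z3op g)) z
      = -2 / (1 + z) ^ 3 * deriv g z + 1 / (1 + z) ^ 2 * deriv (deriv g) z
        + (1 / (1 + z) ^ 2 * deriv (deriv g) z + phi z * deriv (deriv (deriv g)) z) := by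
    rw [hev.deriv_eq]
    exact (((dphi_hasDerivAt hne).mul (hasDerivAt_of_smooth hg1 hz)).add
      ((phi_hasDerivAt hne).mul (hasDerivAt_of_smooth hg2 hz))).deriv
  rw [h2, Z3_deriv_eq hg hz]
  simp only [phi]
  field_simp
  ring

end Z3aux

namespace Z3aux

lemma sum_shift (k : ℕ) (U V T : ℕ → ℝ)
    (hT0 : T 0 = U 0) (hTs : ∀ l ∈ Finset.range (k+1), T (l+1) = U (l+1) + V l)
    (hUtop : U (k+1) = 0) :
    ∑ l ∈ Finset.range (k+1), (U l + V l) = ∑ l ∈ Finset.range (k+2), T l := by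
  rw [Finset.sum_range_succ' T (k+1), Finset.sum_congr rfl hTs, Finset.sum_add_distrib,
    Finset.sum_add_distrib, hT0]
  have h1 : ∑ l ∈ Finset.range (k+2), U l
      = ∑ l ∈ Finset.range (k+1), U (l+1) + U 0 := Finset.sum_range_succ' U (k+1)
  have h2 : ∑ l ∈ Finset.range (k+2), U l
      = ∑ l ∈ Finset.range (k+1), U l + U (k+1) := Finset.sum_range_succ U (k+1)
  rw [hUtop, add_zero] at h2
  rw [← h2, h1]
  ring

lemma main (f : ℝ → ℝ) (hf : ContDiffOn ℝ (⊤ : ℕ∞) f (Ioi (0:ℝ))) :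
    ∀ k : ℕ, ∀ z : ℝ, 0 < z →
      Z3op^[k] (deriv (deriv f)) z
        = ∑ l ∈ Finset.range (k+1),
            (((AB k l).1).eval (1/(1+z)) * deriv (deriv (Z3op^[l] f)) z
              + ((AB k l).2).eval (1/(1+z)) * deriv (Z3op^[l] f) z) := by
  intro k
  induction k with
  | zero =>
      intro z hz
      show deriv (deriv f) z = _
      rw [Finset.sum_range_one]
      show _ = ((AB 0 0).1).eval (1/(1+z)) * deriv (deriv (Z3op^[0] f)) z
        + ((AB 0 0).2).eval (1/(1+z)) * deriv (Z3op^[0] f) z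
      have h : AB 0 0 = (1, 0) := rfl
      rw [h]
      simp
  | succ k ih =>
      intro z hz
      have hne : (1:ℝ) + z ≠ 0 := by positivity
      have hgl : ∀ l, ContDiffOn ℝ (⊤ : ℕ∞) (Z3op^[l] f) (Ioi (0:ℝ)) := iter_smooth hf
      have hS : HasDerivAt (fun w => ∑ l ∈ Finset.range (k+1),
            (((AB k l).1).eval (1/(1+w)) * deriv (deriv (Z3op^[l] f)) w
              + ((AB k l).2).eval (1/(1+w)) * deriv (Z3op^[l] f) w))
          (∑ l ∈ Finset.range (k+1),
            ((-(1/(1+z)^2) * ((AB k l).1).derivative.eval (1/(1+z))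
                * deriv (deriv (Z3op^[l] f)) z
              + ((AB k l).1).eval (1/(1+z)) * deriv (deriv (deriv (Z3op^[l] f))) z)
            + (-(1/(1+z)^2) * ((AB k l).2).derivative.eval (1/(1+z))
                * deriv (Z3op^[l] f) z
              + ((AB k l).2).eval (1/(1+z)) * deriv (deriv (Z3op^[l] f)) z))) z := by
        apply HasDerivAt.fun_sum
        intro l _
        exact ((eval_hasDerivAt _ hne).mul
            (hasDerivAt_of_smooth (deriv_smooth (deriv_smooth (hgl l))) hz)).add
          ((eval_hasDerivAt _ hne).mul (hasDerivAt_of_smooth (deriv_smooth (hgl l)) hz))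
      have hev : Z3op^[k] (deriv (deriv f)) =ᶠ[nhds z] (fun w => ∑ l ∈ Finset.range (k+1),
            (((AB k l).1).eval (1/(1+w)) * deriv (deriv (Z3op^[l] f)) w
              + ((AB k l).2).eval (1/(1+w)) * deriv (Z3op^[l] f) w)) := by
        filter_upwards [isOpen_Ioi.mem_nhds hz] with w hw
        exact ih w hw
      have hLHS : Z3op^[k+1] (deriv (deriv f)) z
          = phi z * (∑ l ∈ Finset.range (k+1),
            ((-(1/(1+z)^2) * ((AB k l).1).derivative.eval (1/(1+z))
                * deriv (deriv (Z3op^[l] f)) z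
              + ((AB k l).1).eval (1/(1+z)) * deriv (deriv (deriv (Z3op^[l] f))) z)
            + (-(1/(1+z)^2) * ((AB k l).2).derivative.eval (1/(1+z))
                * deriv (Z3op^[l] f) z
              + ((AB k l).2).eval (1/(1+z)) * deriv (deriv (Z3op^[l] f)) z))) := by
        rw [Function.iterate_succ_apply']
        show phi z * deriv (Z3op^[k] (deriv (deriv f))) z = _
        rw [hev.deriv_eq, hS.deriv]
      have hphi : phi z = 1 - 1/(1+z) := by
        rw [phi]
        field_simp
        ring
      rw [hLHS, Finset.mul_sum]
      have hterm : ∀ l ∈ Finset.range (k+1),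
          phi z * ((-(1/(1+z)^2) * ((AB k l).1).derivative.eval (1/(1+z))
                * deriv (deriv (Z3op^[l] f)) z
              + ((AB k l).1).eval (1/(1+z)) * deriv (deriv (deriv (Z3op^[l] f))) z)
            + (-(1/(1+z)^2) * ((AB k l).2).derivative.eval (1/(1+z))
                * deriv (Z3op^[l] f) z
              + ((AB k l).2).eval (1/(1+z)) * deriv (deriv (Z3op^[l] f)) z))
          = (((Dop (AB k l).1).eval (1/(1+z))
                + (-2*(1/(1+z))) * ((AB k l).1).eval (1/(1+z))
                + (1 - 1/(1+z)) * ((AB k l).2).eval (1/(1+z)))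
              * deriv (deriv (Z3op^[l] f)) z
              + (Dop (AB k l).2).eval (1/(1+z)) * deriv (Z3op^[l] f) z)
            + ((AB k l).1).eval (1/(1+z))
              * (deriv (deriv (Z3op^[l+1] f)) z
                + 2*(1/(1+z)) * deriv (Z3op^[l+1] f) z) := by
        intro l _
        have hkey : phi z * deriv (deriv (deriv (Z3op^[l] f))) z
            = -2 * (1 / (1 + z)) * deriv (deriv (Z3op^[l] f)) z
            + deriv (deriv (Z3op^[l+1] f)) z
            + 2 * (1 / (1 + z)) * deriv (Z3op^[l+1] f) z := by
          rw [Function.iterate_succ_apply']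
          exact key (hgl l) hz
        calc phi z * ((-(1/(1+z)^2) * ((AB k l).1).derivative.eval (1/(1+z))
                * deriv (deriv (Z3op^[l] f)) z
              + ((AB k l).1).eval (1/(1+z)) * deriv (deriv (deriv (Z3op^[l] f))) z)
            + (-(1/(1+z)^2) * ((AB k l).2).derivative.eval (1/(1+z))
                * deriv (Z3op^[l] f) z
              + ((AB k l).2).eval (1/(1+z)) * deriv (deriv (Z3op^[l] f)) z))
            = phi z * (-(1/(1+z)^2) * ((AB k l).1).derivative.eval (1/(1+z)))
                * deriv (deriv (Z3op^[l] f)) z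
              + ((AB k l).1).eval (1/(1+z))
                * (phi z * deriv (deriv (deriv (Z3op^[l] f))) z)
              + (phi z * (-(1/(1+z)^2) * ((AB k l).2).derivative.eval (1/(1+z)))
                * deriv (Z3op^[l] f) z
              + phi z * ((AB k l).2).eval (1/(1+z))
                * deriv (deriv (Z3op^[l] f)) z) := by ring
          _ = _ := by
            rw [hkey, hphi]
            simp only [Dop, Polynomial.eval_mul, Polynomial.eval_sub, Polynomial.eval_pow,
              Polynomial.eval_X]
            field_simp
            ring
      rw [Finset.sum_congr rfl hterm]
      apply sum_shift k
      · rw [AB_succ_zero]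
        simp only [Dop, Polynomial.eval_add, Polynomial.eval_mul, Polynomial.eval_sub,
          Polynomial.eval_pow, Polynomial.eval_X, Polynomial.eval_one, Polynomial.eval_neg,
          Polynomial.eval_ofNat]
        ring
      · intro l _
        rw [AB_succ_succ]
        simp only [Dop, Polynomial.eval_add, Polynomial.eval_mul, Polynomial.eval_sub,
          Polynomial.eval_pow, Polynomial.eval_X, Polynomial.eval_one, Polynomial.eval_neg,
          Polynomial.eval_ofNat]
        ring
      · have h := AB_of_lt k (k+1) (by omega)
        rw [h]
        simp [Dop_zero]

end Z3aux

namespace Z3aux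

lemma contDiff_eval (P : Polynomial ℝ) : ContDiff ℝ (⊤ : ℕ∞) fun x : ℝ => P.eval x := by
  induction P using Polynomial.induction_on' with
  | add p q hp hq => simpa [Polynomial.eval_add] using hp.add hq
  | monomial n a =>
      simpa [Polynomial.eval_monomial] using (contDiff_const (c := a)).mul (contDiff_id.pow n)

lemma eval_smooth (P : Polynomial ℝ) :
    ContDiffOn ℝ (⊤ : ℕ∞) (fun z => P.eval (1 / (1 + z))) (Ici (0:ℝ)) := by
  apply (contDiff_eval P).comp_contDiffOn
  apply ContDiffOn.div contDiffOn_const (contDiffOn_const.add contDiffOn_id)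
  intro x hx
  have : (0:ℝ) ≤ x := hx
  positivity

lemma eval_bounded (P : Polynomial ℝ) :
    ∃ B : ℝ, ∀ z ∈ Ici (0:ℝ), |P.eval (1 / (1 + z))| ≤ B := by
  obtain ⟨C, hC⟩ := (isCompact_Icc (a := (0:ℝ)) (b := 1)).exists_bound_of_continuousOn
    (P.continuous_aeval.continuousOn)
  refine ⟨C, fun z hz => ?_⟩
  have hz0 : (0:ℝ) ≤ z := hz
  have hmem : 1 / (1 + z) ∈ Icc (0:ℝ) 1 := by
    constructor
    · positivity
    · rw [div_le_one (by positivity)]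
      linarith
  have := hC _ hmem
  simpa [Real.norm_eq_abs] using this

end Z3aux

open Z3aux in
/-- **Lemma 2.5(iii).** For every `k` there are smooth functions `a^k_{l,φ}`, `b^k_{l,φ}`,
bounded on `[0,∞)`, with `a^k_{k,φ} = 1`, such that for every smooth `f` on `(0,∞)` and
`z > 0`, `Z₃^k ∂_{zz} f = Σ_{l=0}^{k} (a^k_{l,φ} ∂_{zz} Z₃^l f + b^k_{l,φ} ∂_z Z₃^l f)`. -/
theorem Z3_commutator_second_deriv (k : ℕ) :
    ∃ a b : ℕ → ℝ → ℝ,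
      (∀ j ≤ k,
        (ContDiffOn ℝ (⊤ : ℕ∞) (a j) (Ici (0:ℝ)) ∧
          ∃ B : ℝ, ∀ z ∈ Ici (0:ℝ), |a j z| ≤ B) ∧
        (ContDiffOn ℝ (⊤ : ℕ∞) (b j) (Ici (0:ℝ)) ∧
          ∃ B : ℝ, ∀ z ∈ Ici (0:ℝ), |b j z| ≤ B)) ∧
      (∀ z : ℝ, a k z = 1) ∧
      (∀ f : ℝ → ℝ, ContDiffOn ℝ (⊤ : ℕ∞) f (Ioi (0:ℝ)) → ∀ z > (0:ℝ),
        Z3op^[k] (deriv (deriv f)) z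
          = ∑ l ∈ Finset.range (k + 1),
              (a l z * deriv (deriv (Z3op^[l] f)) z + b l z * deriv (Z3op^[l] f) z)) := by
  refine ⟨fun j z => ((AB k j).1).eval (1 / (1 + z)),
    fun j z => ((AB k j).2).eval (1 / (1 + z)), ?_, ?_, ?_⟩
  · intro j _
    exact ⟨⟨eval_smooth _, eval_bounded _⟩, ⟨eval_smooth _, eval_bounded _⟩⟩
  · intro z
    simp [AB_diag k]
  · intro f hf z hz
    exact main f hf k z hz
end
end

section
/- Let φ(z) = z/(1+z) and Z₃ = φ(z)∂_z acting on smooth functions of z ∈ (0,∞). For every k ∈ ℕ there exist smooth functions ã^k_{0,φ}, …, ã^k_{k,φ} and b̃^k_{0,φ}, …, b̃^k_{k,φ} of z, bounded on [0,∞), depending only on φ and k, with ã^k_{k,φ} ≡ 1, such that for every smooth function f on (0,∞) and all z > 0: ∂_{zz}(Z₃^k f) = Σ_{l=0}^{k} ã^k_{l,φ}(z) Z₃^l(∂_{zz} f) + Σ_{j=0}^{k} b̃^k_{j,φ}(z) Z₃^j(∂_z f). -/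
open Set

noncomputable section

def cf (p : Polynomial ℝ) (z : ℝ) : ℝ := p.eval (1 + z)⁻¹
def dP (p : Polynomial ℝ) : Polynomial ℝ := -(Polynomial.X ^ 2) * p.derivative

lemma contDiff_eval (p : Polynomial ℝ) : ContDiff ℝ (⊤ : ℕ∞) fun x => p.eval x := by
  induction p using Polynomial.induction_on' with
  | add p q hp hq => simpa [Polynomial.eval_add] using hp.add hq
  | monomial n a => simpa [Polynomial.eval_monomial] using contDiff_const.mul (contDiff_id.pow n)

lemma contDiffAt_cf (p : Polynomial ℝ) {z : ℝ} (hz : 1 + z ≠ 0) :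
    ContDiffAt ℝ (⊤ : ℕ∞) (cf p) z := by
  have h1 : ContDiffAt ℝ (⊤ : ℕ∞) (fun w : ℝ => (1 + w)⁻¹) z :=
    ((contDiff_const.add contDiff_id).contDiffAt).inv hz
  exact ((contDiff_eval p).contDiffAt).comp z h1

lemma cf_bound (p : Polynomial ℝ) : ∃ B : ℝ, ∀ z ∈ Ici (0:ℝ), |cf p z| ≤ B := by
  obtain ⟨B, hB⟩ := (isCompact_Icc (a := (0:ℝ)) (b := 1)).exists_bound_of_continuousOn
    ((contDiff_eval p).continuous.continuousOn)
  refine ⟨B, fun z hz => ?_⟩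
  have h1 : (0:ℝ) < 1 + z := by simp only [mem_Ici] at hz; linarith
  have : (1 + z)⁻¹ ∈ Icc (0:ℝ) 1 := by
    constructor
    · positivity
    · rw [inv_le_one_iff₀]; right; simp only [mem_Ici] at hz; linarith
  simpa [cf] using hB _ this

lemma hasDerivAt_cf (p : Polynomial ℝ) {z : ℝ} (hz : 1 + z ≠ 0) :
    HasDerivAt (cf p) (cf (dP p) z) z := by
  have h1 : HasDerivAt (fun w : ℝ => (1 + w)⁻¹) (-1 / (1 + z) ^ 2) z := by
    simpa using ((hasDerivAt_id z).const_add 1).fun_inv hz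
  have h2 := (Polynomial.hasDerivAt p ((1 + z)⁻¹)).comp z h1
  refine HasDerivAt.congr_deriv h2 ?_
  simp only [cf, dP, Polynomial.eval_mul, Polynomial.eval_neg, Polynomial.eval_pow,
    Polynomial.eval_X]
  field_simp

lemma cf_mul (p q : Polynomial ℝ) (z : ℝ) : cf (p * q) z = cf p z * cf q z := by
  simp [cf]

lemma cf_add (p q : Polynomial ℝ) (z : ℝ) : cf (p + q) z = cf p z + cf q z := by
  simp [cf]

lemma phi_eq_cf {z : ℝ} (hz : 1 + z ≠ 0) : phi z = cf (1 - Polynomial.X) z := by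
  simp only [phi, cf, Polynomial.eval_sub, Polynomial.eval_one, Polynomial.eval_X]
  field_simp
  ring

lemma hasDerivAt_phi {z : ℝ} (hz : 1 + z ≠ 0) :
    HasDerivAt phi (cf (Polynomial.X ^ 2) z) z := by
  have h1 : HasDerivAt (fun w : ℝ => (1 + w)⁻¹) (-1 / (1 + z) ^ 2) z := by
    simpa using ((hasDerivAt_id z).const_add 1).fun_inv hz
  have h2 : HasDerivAt (fun w : ℝ => w * (1 + w)⁻¹)
      (1 * (1 + z)⁻¹ + z * (-1 / (1 + z) ^ 2)) z := (hasDerivAt_id z).mul h1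
  have he : phi = fun w : ℝ => w * (1 + w)⁻¹ := by
    funext w; simp [phi, div_eq_mul_inv]
  rw [he]
  refine HasDerivAt.congr_deriv h2 ?_
  simp only [cf, Polynomial.eval_pow, Polynomial.eval_X]
  field_simp
  ring

lemma phi_contDiffOn : ContDiffOn ℝ (⊤ : ℕ∞) phi (Ioi (0:ℝ)) := by
  intro z hz
  have hz' : 1 + z ≠ 0 := by simp only [mem_Ioi] at hz; positivity
  have : ContDiffAt ℝ (⊤ : ℕ∞) phi z := by
    have := (contDiffAt_cf (1 - Polynomial.X) hz')
    apply this.congr_of_eventuallyEq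
    have hev : ∀ᶠ w in nhds z, 1 + w ≠ 0 := by
      have : Continuous fun w : ℝ => 1 + w := by continuity
      exact this.continuousAt.eventually_ne hz'
    filter_upwards [hev] with w hw
    exact (phi_eq_cf hw)
  exact this.contDiffWithinAt

lemma Z3_contDiffOn {f : ℝ → ℝ} (hf : ContDiffOn ℝ (⊤ : ℕ∞) f (Ioi (0:ℝ))) :
    ContDiffOn ℝ (⊤ : ℕ∞) (Z3op f) (Ioi (0:ℝ)) := by
  exact phi_contDiffOn.mul (hf.deriv_of_isOpen isOpen_Ioi (by simp))

lemma Z3_iter_contDiffOn {f : ℝ → ℝ} (hf : ContDiffOn ℝ (⊤ : ℕ∞) f (Ioi (0:ℝ))) (k : ℕ) :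
    ContDiffOn ℝ (⊤ : ℕ∞) (Z3op^[k] f) (Ioi (0:ℝ)) := by
  induction k with
  | zero => simpa using hf
  | succ n ih => rw [Function.iterate_succ_apply']; exact Z3_contDiffOn ih

lemma deriv_smooth {g : ℝ → ℝ} (hg : ContDiffOn ℝ (⊤ : ℕ∞) g (Ioi (0:ℝ))) :
    ContDiffOn ℝ (⊤ : ℕ∞) (deriv g) (Ioi (0:ℝ)) :=
  hg.deriv_of_isOpen isOpen_Ioi (by simp)

lemma diffAt_of_smooth {g : ℝ → ℝ} (hg : ContDiffOn ℝ (⊤ : ℕ∞) g (Ioi (0:ℝ)))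
    {z : ℝ} (hz : 0 < z) : DifferentiableAt ℝ g z :=
  ((hg.differentiableOn (by simp)).differentiableAt (isOpen_Ioi.mem_nhds hz))

lemma sum_shift (k : ℕ) (P Q : ℕ → Polynomial ℝ) (z : ℝ) (T : ℕ → ℝ) :
    ∑ j ∈ Finset.range (k + 2),
        cf ((if j ≤ k then P j else 0) + (if j = 0 then 0 else Q (j - 1))) z * T j
      = ∑ j ∈ Finset.range (k + 1), cf (P j) z * T j
        + ∑ j ∈ Finset.range (k + 1), cf (Q j) z * T (j + 1) := by
  have key : ∀ j, cf ((if j ≤ k then P j else 0) + (if j = 0 then 0 else Q (j - 1))) z * T j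
      = (if j ≤ k then cf (P j) z * T j else 0)
        + (if j = 0 then 0 else cf (Q (j - 1)) z * T j) := by
    intro j
    rw [cf_add]
    split_ifs <;> simp [cf] <;> ring
  rw [Finset.sum_congr rfl (fun j _ => key j), Finset.sum_add_distrib]
  congr 1
  · rw [Finset.sum_range_succ, if_neg (by omega)]
    rw [add_zero]
    exact Finset.sum_congr rfl (fun j hj => by
      rw [if_pos (by simpa [Nat.lt_succ_iff] using Finset.mem_range.mp hj)])
  · rw [Finset.sum_range_succ']
    simp

def sP (p : Polynomial ℝ) : Polynomial ℝ :=
  Polynomial.X ^ 2 * p + (1 - Polynomial.X) * dP p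

lemma lemT (k : ℕ) : ∃ C : ℕ → Polynomial ℝ, C k = 1 ∧
    ∀ f : ℝ → ℝ, ContDiffOn ℝ (⊤ : ℕ∞) f (Ioi (0:ℝ)) → ∀ z > (0:ℝ),
      deriv (Z3op^[k] f) z
        = ∑ j ∈ Finset.range (k + 1), cf (C j) z * Z3op^[j] (deriv f) z := by
  induction k with
  | zero =>
    refine ⟨fun _ => 1, rfl, fun f hf z hz => ?_⟩
    simp [cf]
  | succ k ih =>
    obtain ⟨C, hCk, hC⟩ := ih
    refine ⟨fun j => (if j ≤ k then sP (C j) else 0) + (if j = 0 then 0 else C (j - 1)),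
      by simp [Nat.succ_ne_zero, hCk], ?_⟩
    intro f hf z hz
    have hz' : (1:ℝ) + z ≠ 0 := by positivity
    set g := Z3op^[k] f with hgdef
    have hg : ContDiffOn ℝ (⊤ : ℕ∞) g (Ioi (0:ℝ)) := Z3_iter_contDiffOn hf k
    have hdf : ContDiffOn ℝ (⊤ : ℕ∞) (deriv f) (Ioi (0:ℝ)) := deriv_smooth hf
    set T : ℕ → ℝ → ℝ := fun j => Z3op^[j] (deriv f) with hTdef
    have hT : ∀ j, ContDiffOn ℝ (⊤ : ℕ∞) (T j) (Ioi (0:ℝ)) :=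
      fun j => Z3_iter_contDiffOn hdf j
    -- derivative of Z3op g at z
    have hstep : Z3op^[k + 1] f = Z3op g := Function.iterate_succ_apply' Z3op k f
    have hdg : HasDerivAt (deriv g) (deriv (deriv g) z) z :=
      (diffAt_of_smooth (deriv_smooth hg) hz).hasDerivAt
    have hZg : HasDerivAt (Z3op g)
        (cf (Polynomial.X ^ 2) z * deriv g z + phi z * deriv (deriv g) z) z :=
      (hasDerivAt_phi hz').mul hdg
    -- deriv (deriv g) z = deriv S z
    have hIH : ∀ w ∈ Ioi (0:ℝ), deriv g w = ∑ j ∈ Finset.range (k + 1), cf (C j) w * T j w :=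
      fun w hw => hC f hf w hw
    have hev : deriv g =ᶠ[nhds z] fun w => ∑ j ∈ Finset.range (k + 1), cf (C j) w * T j w := by
      filter_upwards [isOpen_Ioi.mem_nhds hz] with w hw using hIH w hw
    have hS : HasDerivAt (fun w => ∑ j ∈ Finset.range (k + 1), cf (C j) w * T j w)
        (∑ j ∈ Finset.range (k + 1),
          (cf (dP (C j)) z * T j z + cf (C j) z * deriv (T j) z)) z := by
      apply HasDerivAt.fun_sum
      intro j _
      exact (hasDerivAt_cf (C j) hz').mul (diffAt_of_smooth (hT j) hz).hasDerivAt
    have hddg : deriv (deriv g) z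
        = ∑ j ∈ Finset.range (k + 1),
            (cf (dP (C j)) z * T j z + cf (C j) z * deriv (T j) z) := by
      rw [hev.deriv_eq]; exact hS.deriv
    rw [hstep, hZg.deriv, hIH z hz, hddg]
    rw [sum_shift k (fun j => sP (C j)) C z (fun j => T j z)]
    rw [Finset.mul_sum, Finset.mul_sum, ← Finset.sum_add_distrib, ← Finset.sum_add_distrib]
    apply Finset.sum_congr rfl
    intro j _
    have hTj1 : T (j + 1) z = phi z * deriv (T j) z := by
      show Z3op^[j + 1] (deriv f) z = phi z * deriv (Z3op^[j] (deriv f)) z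
      rw [Function.iterate_succ_apply']
      rfl
    rw [hTj1]
    simp only [sP, cf_add, cf_mul, phi_eq_cf hz']
    ring

def sPA (p : Polynomial ℝ) : Polynomial ℝ :=
  2 * Polynomial.X ^ 2 * p + (1 - Polynomial.X) * dP p

lemma lemMain (k : ℕ) : ∃ A B : ℕ → Polynomial ℝ, A k = 1 ∧
    ∀ f : ℝ → ℝ, ContDiffOn ℝ (⊤ : ℕ∞) f (Ioi (0:ℝ)) → ∀ z > (0:ℝ),
      deriv (deriv (Z3op^[k] f)) z
        = ∑ l ∈ Finset.range (k + 1), cf (A l) z * Z3op^[l] (deriv (deriv f)) z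
          + ∑ j ∈ Finset.range (k + 1), cf (B j) z * Z3op^[j] (deriv f) z := by
  induction k with
  | zero =>
    refine ⟨fun _ => 1, fun _ => 0, rfl, fun f hf z hz => ?_⟩
    simp [cf]
  | succ k ih =>
    obtain ⟨A, B, hAk, hAB⟩ := ih
    obtain ⟨C, hCk, hC⟩ := lemT k
    refine ⟨fun l => (if l ≤ k then sPA (A l) else 0) + (if l = 0 then 0 else A (l - 1)),
      fun j => (if j ≤ k then dP (Polynomial.X ^ 2) * C j + sPA (B j) else 0)
        + (if j = 0 then 0 else B (j - 1)),
      by simp [Nat.succ_ne_zero, hAk], ?_⟩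
    intro f hf z hz
    have hz' : (1:ℝ) + z ≠ 0 := by positivity
    set g := Z3op^[k] f with hgdef
    have hg : ContDiffOn ℝ (⊤ : ℕ∞) g (Ioi (0:ℝ)) := Z3_iter_contDiffOn hf k
    have hdf : ContDiffOn ℝ (⊤ : ℕ∞) (deriv f) (Ioi (0:ℝ)) := deriv_smooth hf
    have hddf : ContDiffOn ℝ (⊤ : ℕ∞) (deriv (deriv f)) (Ioi (0:ℝ)) := deriv_smooth hdf
    set T : ℕ → ℝ → ℝ := fun j => Z3op^[j] (deriv f) with hTdef
    set U : ℕ → ℝ → ℝ := fun l => Z3op^[l] (deriv (deriv f)) with hUdef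
    have hT : ∀ j, ContDiffOn ℝ (⊤ : ℕ∞) (T j) (Ioi (0:ℝ)) :=
      fun j => Z3_iter_contDiffOn hdf j
    have hU : ∀ l, ContDiffOn ℝ (⊤ : ℕ∞) (U l) (Ioi (0:ℝ)) :=
      fun l => Z3_iter_contDiffOn hddf l
    have hstep : Z3op^[k + 1] f = Z3op g := Function.iterate_succ_apply' Z3op k f
    -- first derivative of Z3op g on Ioi 0
    have h1 : ∀ w ∈ Ioi (0:ℝ), deriv (Z3op g) w
        = cf (Polynomial.X ^ 2) w * deriv g w + phi w * deriv (deriv g) w := by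
      intro w hw
      have hw0 : (0:ℝ) < w := hw
      have hw' : (1:ℝ) + w ≠ 0 := by positivity
      exact ((hasDerivAt_phi hw').mul
        (diffAt_of_smooth (deriv_smooth hg) hw0).hasDerivAt).deriv
    have hev1 : deriv (Z3op g) =ᶠ[nhds z]
        fun w => cf (Polynomial.X ^ 2) w * deriv g w + phi w * deriv (deriv g) w := by
      filter_upwards [isOpen_Ioi.mem_nhds hz] with w hw using h1 w hw
    have hdg : HasDerivAt (deriv g) (deriv (deriv g) z) z :=
      (diffAt_of_smooth (deriv_smooth hg) hz).hasDerivAt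
    have hddgd : HasDerivAt (deriv (deriv g)) (deriv (deriv (deriv g)) z) z :=
      (diffAt_of_smooth (deriv_smooth (deriv_smooth hg)) hz).hasDerivAt
    -- second derivative of Z3op g at z
    have h2 : deriv (deriv (Z3op g)) z
        = (cf (dP (Polynomial.X ^ 2)) z * deriv g z
            + cf (Polynomial.X ^ 2) z * deriv (deriv g) z)
          + (cf (Polynomial.X ^ 2) z * deriv (deriv g) z
            + phi z * deriv (deriv (deriv g)) z) := by
      rw [hev1.deriv_eq]
      exact (((hasDerivAt_cf (Polynomial.X ^ 2) hz').mul hdg).add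
        ((hasDerivAt_phi hz').mul hddgd)).deriv
    -- third derivative of g via IH
    have hIH2 : ∀ w ∈ Ioi (0:ℝ), deriv (deriv g) w
        = ∑ l ∈ Finset.range (k + 1), cf (A l) w * U l w
          + ∑ j ∈ Finset.range (k + 1), cf (B j) w * T j w :=
      fun w hw => hAB f hf w hw
    have hev2 : deriv (deriv g) =ᶠ[nhds z]
        fun w => ∑ l ∈ Finset.range (k + 1), cf (A l) w * U l w
          + ∑ j ∈ Finset.range (k + 1), cf (B j) w * T j w := by
      filter_upwards [isOpen_Ioi.mem_nhds hz] with w hw using hIH2 w hw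
    have h3 : deriv (deriv (deriv g)) z
        = ∑ l ∈ Finset.range (k + 1),
            (cf (dP (A l)) z * U l z + cf (A l) z * deriv (U l) z)
          + ∑ j ∈ Finset.range (k + 1),
            (cf (dP (B j)) z * T j z + cf (B j) z * deriv (T j) z) := by
      rw [hev2.deriv_eq]
      refine (HasDerivAt.add ?_ ?_).deriv
      · exact HasDerivAt.fun_sum fun l _ =>
          (hasDerivAt_cf (A l) hz').mul (diffAt_of_smooth (hU l) hz).hasDerivAt
      · exact HasDerivAt.fun_sum fun j _ =>
          (hasDerivAt_cf (B j) hz').mul (diffAt_of_smooth (hT j) hz).hasDerivAt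
    have h4 : deriv g z = ∑ j ∈ Finset.range (k + 1), cf (C j) z * T j z := hC f hf z hz
    rw [hstep, h2, h3, h4, hIH2 z hz]
    rw [sum_shift k (fun l => sPA (A l)) A z (fun l => U l z),
      sum_shift k (fun j => dP (Polynomial.X ^ 2) * C j + sPA (B j)) B z (fun j => T j z)]
    have hU1 : ∀ l, U (l + 1) z = phi z * deriv (U l) z := by
      intro l
      show Z3op^[l + 1] (deriv (deriv f)) z = phi z * deriv (Z3op^[l] (deriv (deriv f))) z
      rw [Function.iterate_succ_apply']; rfl
    have hT1 : ∀ j, T (j + 1) z = phi z * deriv (T j) z := by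
      intro j
      show Z3op^[j + 1] (deriv f) z = phi z * deriv (Z3op^[j] (deriv f)) z
      rw [Function.iterate_succ_apply']; rfl
    simp only [hU1, hT1, mul_add, Finset.mul_sum, ← Finset.sum_add_distrib]
    apply Finset.sum_congr rfl
    intro j _
    simp only [sPA, cf_add, cf_mul, phi_eq_cf hz', cf, Polynomial.eval_ofNat,
      Polynomial.eval_mul, Polynomial.eval_add, Polynomial.eval_sub, Polynomial.eval_one,
      Polynomial.eval_pow, Polynomial.eval_X]
    ring

lemma cf_contDiffOn (p : Polynomial ℝ) : ContDiffOn ℝ (⊤ : ℕ∞) (cf p) (Ici (0:ℝ)) := by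
  intro z hz
  have hz' : (1:ℝ) + z ≠ 0 := by
    have : (0:ℝ) ≤ z := hz
    positivity
  exact (contDiffAt_cf p hz').contDiffWithinAt


/-- **Lemma 2.5(iv).** For every `k` there are smooth functions `ã^k_{l,φ}`, `b̃^k_{j,φ}`,
bounded on `[0,∞)`, with `ã^k_{k,φ} = 1`, such that for every smooth `f` on `(0,∞)` and
`z > 0`, `∂_{zz} Z₃^k f = Σ_{l=0}^{k} ã^k_{l,φ} Z₃^l ∂_{zz} f + Σ_{j=0}^{k} b̃^k_{j,φ} Z₃^j ∂_z f`. -/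
theorem second_deriv_commutator_Z3 (k : ℕ) :
    ∃ a b : ℕ → ℝ → ℝ,
      (∀ j ≤ k,
        (ContDiffOn ℝ (⊤ : ℕ∞) (a j) (Ici (0:ℝ)) ∧
          ∃ B : ℝ, ∀ z ∈ Ici (0:ℝ), |a j z| ≤ B) ∧
        (ContDiffOn ℝ (⊤ : ℕ∞) (b j) (Ici (0:ℝ)) ∧
          ∃ B : ℝ, ∀ z ∈ Ici (0:ℝ), |b j z| ≤ B)) ∧
      (∀ z : ℝ, a k z = 1) ∧
      (∀ f : ℝ → ℝ, ContDiffOn ℝ (⊤ : ℕ∞) f (Ioi (0:ℝ)) → ∀ z > (0:ℝ),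
        deriv (deriv (Z3op^[k] f)) z
          = ∑ l ∈ Finset.range (k + 1), a l z * Z3op^[l] (deriv (deriv f)) z
            + ∑ j ∈ Finset.range (k + 1), b j z * Z3op^[j] (deriv f) z) := by
  obtain ⟨A, B, hAk, hAB⟩ := lemMain k
  refine ⟨fun j => cf (A j), fun j => cf (B j), ?_, ?_, hAB⟩
  · intro j _
    exact ⟨⟨cf_contDiffOn (A j), cf_bound (A j)⟩, ⟨cf_contDiffOn (B j), cf_bound (B j)⟩⟩
  · intro z
    simp [hAk, cf]
end
end
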